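/- Multi-sample unbiasedness for a decision vertex: let b₁,…,b_N be i.i.d. samples from a Bernoulli distribution Q with Q(b)=p_b>0, let f_b = #{i : bᵢ = b}, and let Ẑ₀, Ẑ₁ be random variables, independent of the samples, such that conditional on f_b ≥ 1, E[Ẑ_b] = Z_b. Then E[(Ẑ₀·f₀)/(2p₀·N) + (Ẑ₁·f₁)/(2p₁·N)] = (Z₀+Z₁)/2, with terms having f_b = 0 interpreted as 0. -/

import Mathlib

open MeasureTheory ProbabilityTheory

lemma aux15 {Ω : Type*} [MeasurableSpace Ω] (μ : Measure Ω) [IsProbabilityMeasure μ]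
    (N : ℕ) (bs : Fin N → Ω → Bool) (hbs : ∀ i, Measurable (bs i)) (b : Bool) (p : ℝ)
    (hp : 0 ≤ p) (hlaw : ∀ i, μ {ω | bs i ω = b} = ENNReal.ofReal p)
    (Zhat : Ω → ℝ) (hi : Integrable Zhat μ)
    (hind : IndepFun (fun ω i => bs i ω) Zhat μ)
    (f : Ω → ℝ)
    (hf : ∀ ω, f ω = ((Finset.univ.filter fun i => bs i ω = b).card : ℝ)) :
    Integrable (fun ω => Zhat ω * f ω) μ ∧
      ∫ ω, Zhat ω * f ω ∂μ = (∫ ω, Zhat ω ∂μ) * (N * p) := by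
  set g : (Fin N → Bool) → ℝ := fun v => ((Finset.univ.filter fun i => v i = b).card : ℝ) with hg
  have hgm : Measurable g := measurable_of_countable g
  have hB : Measurable (fun ω i => bs i ω) := measurable_pi_lambda _ hbs
  have hfg : f = g ∘ (fun ω i => bs i ω) := funext fun ω => hf ω
  have hfm : Measurable f := hfg ▸ hgm.comp hB
  have hbound : ∀ ω, ‖f ω‖ ≤ N := by
    intro ω
    rw [hf ω, Real.norm_natCast]
    have h := Finset.card_filter_le (Finset.univ : Finset (Fin N)) (fun i => bs i ω = b)
    simp only [Finset.card_univ, Fintype.card_fin] at h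
    exact_mod_cast h
  have hint : Integrable (fun ω => Zhat ω * f ω) μ := by
    have := Integrable.bdd_mul (c := N) hi hfm.aestronglyMeasurable (Filter.Eventually.of_forall hbound)
    simpa [mul_comm] using this.congr (Filter.Eventually.of_forall fun ω => mul_comm (f ω) (Zhat ω))
  refine ⟨hint, ?_⟩
  have hindep : IndepFun Zhat f μ := by
    have := (hind.comp hgm measurable_id).symm
    rwa [hfg]
  have hmul : ∫ ω, Zhat ω * f ω ∂μ = (∫ ω, Zhat ω ∂μ) * (∫ ω, f ω ∂μ) :=
    hindep.integral_fun_mul_eq_mul_integral hi.1 hfm.aestronglyMeasurable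
  have hfint : ∫ ω, f ω ∂μ = N * p := by
    have hrw : ∀ ω, f ω = ∑ i : Fin N, ({ω | bs i ω = b}.indicator (fun _ => (1:ℝ)) ω) := by
      intro ω
      rw [hf, Finset.card_filter]
      push_cast
      refine Finset.sum_congr rfl fun i _ => ?_
      by_cases h : bs i ω = b <;> simp [Set.indicator, h]
    rw [integral_congr_ae (Filter.Eventually.of_forall hrw), integral_finset_sum]
    · have : ∀ i : Fin N, ∫ ω, ({ω | bs i ω = b}.indicator (fun _ => (1:ℝ)) ω) ∂μ = p := by
        intro i
        have hms : MeasurableSet {ω | bs i ω = b} := hbs i (measurableSet_singleton b)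
        rw [integral_indicator_const (1:ℝ) hms, measureReal_def, hlaw i]
        simp [ENNReal.toReal_ofReal hp]
      rw [Finset.sum_congr rfl fun i _ => this i]
      simp [Finset.sum_const]
    · intro i _
      have hms : MeasurableSet {ω | bs i ω = b} := hbs i (measurableSet_singleton b)
      exact (integrable_const (1:ℝ)).indicator hms
  rw [hmul, hfint]

theorem stmt15 {Ω : Type*} [MeasurableSpace Ω] (μ : Measure Ω) [IsProbabilityMeasure μ]
    (N : ℕ) (hN : 0 < N)
    (bs : Fin N → Ω → Bool) (hbs : ∀ i, Measurable (bs i))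
    (p₀ p₁ : ℝ) (hp₀ : 0 < p₀) (hp₁ : 0 < p₁) (hpsum : p₀ + p₁ = 1)
    (hiid : iIndepFun bs μ)
    (hlaw₀ : ∀ i, μ {ω | bs i ω = false} = ENNReal.ofReal p₀)
    (hlaw₁ : ∀ i, μ {ω | bs i ω = true} = ENNReal.ofReal p₁)
    (f₀ f₁ : Ω → ℝ)
    (hf₀ : ∀ ω, f₀ ω = ((Finset.univ.filter fun i => bs i ω = false).card : ℝ))
    (hf₁ : ∀ ω, f₁ ω = ((Finset.univ.filter fun i => bs i ω = true).card : ℝ))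
    (Zhat₀ Zhat₁ : Ω → ℝ) (hi₀ : Integrable Zhat₀ μ) (hi₁ : Integrable Zhat₁ μ)
    (hind₀ : IndepFun (fun ω i => bs i ω) Zhat₀ μ)
    (hind₁ : IndepFun (fun ω i => bs i ω) Zhat₁ μ)
    (Z₀ Z₁ : ℝ) (hm₀ : ∫ ω, Zhat₀ ω ∂μ = Z₀) (hm₁ : ∫ ω, Zhat₁ ω ∂μ = Z₁) :
    ∫ ω, (Zhat₀ ω * f₀ ω / (2 * p₀ * N) + Zhat₁ ω * f₁ ω / (2 * p₁ * N)) ∂μ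
      = (Z₀ + Z₁) / 2 := by
  obtain ⟨hint₀, hI₀⟩ := aux15 μ N bs hbs false p₀ hp₀.le hlaw₀ Zhat₀ hi₀ hind₀ f₀ hf₀
  obtain ⟨hint₁, hI₁⟩ := aux15 μ N bs hbs true p₁ hp₁.le hlaw₁ Zhat₁ hi₁ hind₁ f₁ hf₁
  rw [integral_add (hint₀.div_const _) (hint₁.div_const _), integral_div, integral_div,
    hI₀, hI₁, hm₀, hm₁]
  have hN' : (N : ℝ) ≠ 0 := Nat.cast_ne_zero.mpr hN.ne'
  field_simp
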